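/- For all integers μ ≥ 0 and α ≥ 1, ∫₀^π cos(μθ) sin^α θ dθ = π · α! · cos(μπ/2) / (2^α · Γ((α−μ+2)/2) · Γ((α+μ+2)/2)), with the convention that the right-hand side equals 0 when (α−μ+2)/2 is a nonpositive integer (in particular the integral vanishes for odd μ, and for μ > α with μ, α of the same parity). -/

import Mathlib

open Real

section Helpers
open intervalIntegral

private lemma cont_aux' (μ k : ℕ) : Continuous (fun θ : ℝ => Real.cos (μ*θ) * Real.sin θ ^ k) :=
  (Real.continuous_cos.comp (continuous_const.mul continuous_id)).mul (Real.continuous_sin.pow _)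

private lemma rec_step' (μ α : ℕ) :
    (((α:ℝ)+2)^2 - (μ:ℝ)^2) * ∫ θ in (0:ℝ)..π, Real.cos (μ*θ) * Real.sin θ ^ (α+2)
    = ((α:ℝ)+2)*((α:ℝ)+1) * ∫ θ in (0:ℝ)..π, Real.cos (μ*θ) * Real.sin θ ^ α := by
  have i1 : IntervalIntegrable (fun θ => Real.cos (μ*θ) * Real.sin θ ^ α) MeasureTheory.volume 0 π :=
    (cont_aux' μ α).intervalIntegrable _ _
  have i2 : IntervalIntegrable (fun θ => Real.cos (μ*θ) * Real.sin θ ^ (α+2)) MeasureTheory.volume 0 π :=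
    (cont_aux' μ (α+2)).intervalIntegrable _ _
  have key : ∫ θ in (0:ℝ)..π,
      (((α:ℝ)+2)*((α:ℝ)+1) * (Real.cos (μ*θ) * Real.sin θ ^ α)
        - (((α:ℝ)+2)^2 - (μ:ℝ)^2) * (Real.cos (μ*θ) * Real.sin θ ^ (α+2))) = 0 := by
    have hd : ∀ θ ∈ Set.uIcc (0:ℝ) π, HasDerivAt
        (fun θ : ℝ => ((α:ℝ)+2) * (Real.cos (μ*θ) * Real.sin θ^(α+1) * Real.cos θ)
          + (μ:ℝ) * (Real.sin (μ*θ) * Real.sin θ^(α+2)))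
        (((α:ℝ)+2)*((α:ℝ)+1) * (Real.cos (μ*θ) * Real.sin θ ^ α)
          - (((α:ℝ)+2)^2 - (μ:ℝ)^2) * (Real.cos (μ*θ) * Real.sin θ ^ (α+2))) θ := by
      intro θ _
      have hm : HasDerivAt (fun θ:ℝ => (μ:ℝ)*θ) (μ:ℝ) θ := by
        simpa using (hasDerivAt_id θ).const_mul (μ:ℝ)
      have hc : HasDerivAt (fun θ:ℝ => Real.cos (μ*θ)) (-Real.sin (μ*θ) * μ) θ := hm.cos
      have hs : HasDerivAt (fun θ:ℝ => Real.sin (μ*θ)) (Real.cos (μ*θ) * μ) θ := hm.sin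
      have hp1 : HasDerivAt (fun θ:ℝ => Real.sin θ^(α+1))
          (((α:ℝ)+1) * Real.sin θ^α * Real.cos θ) θ := by
        have := (Real.hasDerivAt_sin θ).fun_pow (α+1); push_cast at this; simpa using this
      have hp2 : HasDerivAt (fun θ:ℝ => Real.sin θ^(α+2))
          (((α:ℝ)+2) * Real.sin θ^(α+1) * Real.cos θ) θ := by
        have := (Real.hasDerivAt_sin θ).fun_pow (α+2); push_cast at this; simpa using this
      have H := (((hc.fun_mul hp1).fun_mul (Real.hasDerivAt_cos θ)).const_mul ((α:ℝ)+2)).fun_add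
        ((hs.fun_mul hp2).const_mul (μ:ℝ))
      refine H.congr_deriv ?_
      have h1 : Real.cos θ ^ 2 = 1 - Real.sin θ ^ 2 := Real.cos_sq' θ
      linear_combination ((((α:ℝ)+2)*((α:ℝ)+1) * Real.cos (μ*θ) * Real.sin θ^α) * h1)
    rw [integral_eq_sub_of_hasDerivAt hd (((i1.const_mul _).sub (i2.const_mul _)))]
    simp
  rw [integral_sub (i1.const_mul _) (i2.const_mul _), integral_const_mul, integral_const_mul] at key
  linarith [key]

private lemma diag' (n : ℕ) :
    ∫ θ in (0:ℝ)..π, Real.cos (n*θ) * Real.sin θ ^ n = π * Real.cos (n*π/2) / 2^n := by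
  have h2I : (2 * Complex.I) ≠ 0 := by simp [Complex.I_ne_zero]
  have hpt : ∀ θ : ℝ, Real.cos (n*θ) * Real.sin θ ^ n
      = (((Complex.exp (2*Complex.I*θ) - 1)^n / (2*Complex.I)^n)).re := by
    intro θ
    have e1 : Complex.exp (2*Complex.I*θ) - 1
        = Complex.exp (Complex.I*θ) * (2*Complex.I*(Real.sin θ : ℂ)) := by
      rw [Complex.ofReal_sin, Complex.sin]
      set E := Complex.exp (Complex.I*(θ:ℂ)) with hE
      have hcomm : Complex.exp ((θ:ℂ)*Complex.I) = E := by rw [hE, mul_comm]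
      have hEF : E * Complex.exp (-(θ:ℂ)*Complex.I) = 1 := by
        rw [hE, ← Complex.exp_add]; ring_nf; exact Complex.exp_zero
      have h2 : Complex.exp (2*Complex.I*(θ:ℂ)) = E * E := by
        rw [hE, ← Complex.exp_add]; ring_nf
      rw [h2, hcomm]
      set F := Complex.exp (-(θ:ℂ)*Complex.I)
      linear_combination hEF - E*(F-E)*Complex.I_sq
    rw [e1, mul_pow, mul_pow, mul_comm ((2*Complex.I)^n), ← mul_assoc, mul_div_assoc,
      div_self (pow_ne_zero _ h2I), mul_one, ← Complex.exp_nat_mul]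
    have harg : (n : ℂ) * (Complex.I * θ) = ((n * θ : ℝ) : ℂ) * Complex.I := by
      push_cast; ring
    rw [harg, Complex.exp_mul_I, ← Complex.ofReal_sin, ← Complex.ofReal_cos,
      ← Complex.ofReal_pow]
    simp only [Complex.add_re, Complex.mul_re, Complex.mul_im, Complex.add_im,
      Complex.ofReal_re, Complex.ofReal_im, Complex.I_re, Complex.I_im]
    ring
  simp_rw [hpt]
  have hInt : IntervalIntegrable (fun θ : ℝ => (Complex.exp (2*Complex.I*θ) - 1)^n / (2*Complex.I)^n)
      MeasureTheory.volume 0 π := by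
    apply Continuous.intervalIntegrable; fun_prop
  rw [show (fun θ:ℝ => ((Complex.exp (2*Complex.I*θ) - 1)^n / (2*Complex.I)^n).re)
      = fun θ:ℝ => Complex.reCLM ((Complex.exp (2*Complex.I*θ) - 1)^n / (2*Complex.I)^n) from rfl,
    Complex.reCLM.intervalIntegral_comp_comm hInt]
  have hmain : (∫ θ in (0:ℝ)..π, (Complex.exp (2*Complex.I*θ) - 1)^n)
      = (-1:ℂ)^n * π := by
    have expand : ∀ θ:ℝ, (Complex.exp (2*Complex.I*θ) - 1)^n
        = ∑ m ∈ Finset.range (n+1), (-1:ℂ)^(m+n) * Complex.exp ((2*Complex.I*m)*θ) * (n.choose m) := by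
      intro θ
      rw [sub_pow]
      refine Finset.sum_congr rfl fun m _ => ?_
      rw [one_pow, ← Complex.exp_nat_mul]
      have : (m:ℂ) * (2*Complex.I*θ) = (2*Complex.I*m)*θ := by ring
      rw [this]; ring
    simp_rw [expand]
    rw [integral_finset_sum (fun m _ => by apply Continuous.intervalIntegrable; fun_prop)]
    rw [Finset.sum_eq_single 0]
    · simp; ring
    · intro m hm hm0
      have hc : (2*Complex.I*(m:ℂ)) ≠ 0 := by
        simp [Complex.I_ne_zero, hm0]
      have hfun : (fun x:ℝ => (-1:ℂ)^(m+n) * Complex.exp ((2*Complex.I*m)*x) * (n.choose m))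
          = fun x:ℝ => ((-1:ℂ)^(m+n) * (n.choose m)) * Complex.exp ((2*Complex.I*m)*x) := by
        ext x; ring
      rw [hfun, integral_const_mul, integral_exp_mul_complex hc]
      have h1 : Complex.exp (2*Complex.I*(m:ℂ)*(π:ℂ)) = 1 := by
        have : (2*Complex.I*(m:ℂ))*(π:ℂ) = (m:ℕ) * (2 * (π:ℂ) * Complex.I) := by push_cast; ring
        rw [this, Complex.exp_nat_mul_two_pi_mul_I]
      have h0 : Complex.exp (2*Complex.I*(m:ℂ)*((0:ℝ):ℂ)) = 1 := by norm_num
      rw [show ((0:ℝ):ℂ) = 0 by norm_num] at h0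
      simp [h1, h0]
    · simp
  rw [intervalIntegral.integral_div, hmain]
  have hI : Complex.I = Complex.exp (((π/2 : ℝ):ℂ) * Complex.I) := by
    rw [Complex.exp_mul_I]; simp
  have hIn : ((Complex.I)^n).re = Real.cos (n * π/2) := by
    rw [hI, ← Complex.exp_nat_mul]
    have : (n:ℂ) * (((π/2:ℝ):ℂ) * Complex.I) = ((n*π/2 : ℝ):ℂ) * Complex.I := by push_cast; ring
    rw [this, Complex.exp_mul_I, ← Complex.ofReal_sin, ← Complex.ofReal_cos]
    simp only [Complex.add_re, Complex.mul_re, Complex.ofReal_re, Complex.ofReal_im,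
      Complex.I_re, Complex.I_im]
    ring
  have key : ((-1:ℂ)^n * π / (2*Complex.I)^n) = ((Complex.I)^n) * ((π / 2^n : ℝ):ℂ) := by
    rw [mul_pow, div_eq_iff (by exact mul_ne_zero (pow_ne_zero _ two_ne_zero) (pow_ne_zero _ Complex.I_ne_zero))]
    have h2 : Complex.I ^ n * ((π/2^n : ℝ):ℂ) * (2^n * Complex.I^n) = ((Complex.I^2)^n) * ((π/2^n:ℝ):ℂ) * 2^n := by ring
    rw [h2, Complex.I_sq]
    push_cast
    rw [mul_assoc, div_mul_cancel₀ _ (pow_ne_zero _ (two_ne_zero (α := ℂ)))]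
  rw [key]
  rw [show Complex.reCLM (Complex.I^n * ((π/2^n:ℝ):ℂ)) = (Complex.I^n * ((π/2^n:ℝ):ℂ)).re from rfl,
    Complex.mul_re, Complex.ofReal_re, Complex.ofReal_im, hIn]
  simp
  ring

private lemma cos_odd_mul_pi_div_two' (k : ℕ) : Real.cos ((2*(k:ℝ)+1)*π/2) = 0 := by
  have h : ((2*(k:ℝ)+1)*π/2) = k*π + π/2 := by ring
  rw [h, Real.cos_add, Real.cos_pi_div_two, Real.sin_pi_div_two, Real.sin_nat_mul_pi]
  simp

private lemma cos_nat_mul_pi' (k : ℕ) : Real.cos ((k:ℝ)*π) = (-1)^k := by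
  simpa using Real.cos_nat_mul_pi_sub 0 k

private lemma GammaProd' : ∀ m : ℕ, Real.Gamma (3/2 - m) * Real.Gamma (3/2 + m)
    = (1/4 - (m:ℝ)^2) * (-1)^m * π := by
  intro m
  induction m with
  | zero =>
    simp only [Nat.cast_zero, sub_zero, add_zero, pow_zero]
    have h32 : (3/2 : ℝ) = 1/2 + 1 := by norm_num
    rw [h32, Real.Gamma_add_one (by norm_num : (1/2:ℝ) ≠ 0), Real.Gamma_one_half_eq]
    have := Real.mul_self_sqrt (le_of_lt Real.pi_pos)
    nlinarith [this]
  | succ m ih =>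
    have h4 : (1/2:ℝ) - m ≠ 0 := by
      intro h
      have : (2:ℝ)*m = 1 := by linarith
      have : 2*m = 1 := by exact_mod_cast this
      omega
    have h3 : (3/2:ℝ) - m = (1/2 - m) + 1 := by ring
    rw [h3, Real.Gamma_add_one h4] at ih
    have h1 : (3/2:ℝ) - (m+1:ℕ) = 1/2 - m := by push_cast; ring
    have h2 : (3/2:ℝ) + (m+1:ℕ) = (3/2 + m) + 1 := by push_cast; ring
    rw [h1, h2, Real.Gamma_add_one (by positivity : (3/2:ℝ) + m ≠ 0)]
    apply mul_left_cancel₀ h4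
    push_cast
    linear_combination (3/2+(m:ℝ)) * ih

private lemma int_cos_nat' (μ : ℕ) (hμ : μ ≠ 0) : ∫ θ in (0:ℝ)..π, Real.cos (μ*θ) = 0 := by
  have hc : (μ:ℝ) ≠ 0 := Nat.cast_ne_zero.mpr hμ
  rw [intervalIntegral.integral_comp_mul_left (fun x => Real.cos x) hc]
  simp [integral_cos, Real.sin_nat_mul_pi]

private lemma int1'' (μ : ℕ) (hμ : μ ≠ 1) :
    ∫ θ in (0:ℝ)..π, Real.cos (μ*θ) * Real.sin θ = (1 + Real.cos (μ*π))/(1-(μ:ℝ)^2) := by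
  have hp : (μ:ℝ) + 1 ≠ 0 := by positivity
  have hm : (μ:ℝ) - 1 ≠ 0 := by
    intro h
    exact hμ (by exact_mod_cast (by linarith : (μ:ℝ) = 1))
  have hd : ∀ θ ∈ Set.uIcc (0:ℝ) π, HasDerivAt
      (fun θ : ℝ => -Real.cos (((μ:ℝ)+1)*θ)/(2*((μ:ℝ)+1)) + Real.cos (((μ:ℝ)-1)*θ)/(2*((μ:ℝ)-1)))
      (Real.cos (μ*θ) * Real.sin θ) θ := by
    intro θ _
    have hma : HasDerivAt (fun θ:ℝ => ((μ:ℝ)+1)*θ) ((μ:ℝ)+1) θ := by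
      simpa using (hasDerivAt_id θ).const_mul ((μ:ℝ)+1)
    have hmb : HasDerivAt (fun θ:ℝ => ((μ:ℝ)-1)*θ) ((μ:ℝ)-1) θ := by
      simpa using (hasDerivAt_id θ).const_mul ((μ:ℝ)-1)
    have H := ((hma.cos.fun_neg.div_const (2*((μ:ℝ)+1))).fun_add (hmb.cos.div_const (2*((μ:ℝ)-1))))
    refine H.congr_deriv ?_
    have e1 : Real.sin (((μ:ℝ)+1)*θ) = Real.sin (μ*θ) * Real.cos θ + Real.cos (μ*θ) * Real.sin θ := by
      rw [show ((μ:ℝ)+1)*θ = μ*θ + θ by ring, Real.sin_add]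
    have e2 : Real.sin (((μ:ℝ)-1)*θ) = Real.sin (μ*θ) * Real.cos θ - Real.cos (μ*θ) * Real.sin θ := by
      rw [show ((μ:ℝ)-1)*θ = μ*θ - θ by ring, Real.sin_sub]
    rw [e1, e2]
    field_simp
    ring
  rw [integral_eq_sub_of_hasDerivAt hd
    (((Real.continuous_cos.comp (continuous_const.mul continuous_id)).mul Real.continuous_sin).intervalIntegrable _ _)]
  have c1 : Real.cos (((μ:ℝ)+1)*π) = -Real.cos (μ*π) := by
    rw [show ((μ:ℝ)+1)*π = μ*π + π by ring, Real.cos_add_pi]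
  have c2 : Real.cos (((μ:ℝ)-1)*π) = -Real.cos (μ*π) := by
    rw [show ((μ:ℝ)-1)*π = μ*π - π by ring, Real.cos_sub_pi]
  rw [c1, c2]
  simp only [mul_zero, Real.cos_zero]
  have h1 : (1:ℝ) - (μ:ℝ)^2 ≠ 0 := by
    intro h
    have h2 : ((μ:ℝ))^2 = 1 := by linarith
    have h3 : μ^2 = 1 := by exact_mod_cast h2
    exact hμ ((pow_eq_one_iff.mp h3).resolve_right two_ne_zero)
  field_simp
  ring

private lemma rhs_step' (μ α : ℕ) (hμ : (μ:ℝ) ≠ (α:ℝ)+2) :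
    (((α:ℝ)+2)*((α:ℝ)+1)) * (π * (Nat.factorial α : ℝ) * Real.cos (μ*π/2) /
      (2^α * Real.Gamma (((α:ℝ)-μ+2)/2) * Real.Gamma (((α:ℝ)+μ+2)/2)))
    = (((α:ℝ)+2)^2 - (μ:ℝ)^2) * (π * (Nat.factorial (α+2) : ℝ) * Real.cos (μ*π/2) /
      (2^(α+2) * Real.Gamma ((((α:ℝ)+2)-μ+2)/2) * Real.Gamma ((((α:ℝ)+2)+μ+2)/2))) := by
  have hne1 : ((α:ℝ)-μ+2)/2 ≠ 0 := by
    intro h; apply hμ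
    have : (α:ℝ)-μ+2 = 0 := by linarith [h]
    linarith
  have hne2 : ((α:ℝ)+μ+2)/2 ≠ 0 := by positivity
  have e1 : (((α:ℝ)+2)-μ+2)/2 = ((α:ℝ)-μ+2)/2 + 1 := by ring
  have e2 : (((α:ℝ)+2)+μ+2)/2 = ((α:ℝ)+μ+2)/2 + 1 := by ring
  have ef : (Nat.factorial (α+2) : ℝ) = ((α:ℝ)+2)*((α:ℝ)+1)*(Nat.factorial α : ℝ) := by
    rw [Nat.factorial_succ, Nat.factorial_succ]; push_cast; ring
  rw [e1, e2, Real.Gamma_add_one hne1, Real.Gamma_add_one hne2, ef]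
  rcases eq_or_ne (Real.Gamma (((α:ℝ)-μ+2)/2)) 0 with h | h
  · simp [h]
  · have hΓ2 : Real.Gamma (((α:ℝ)+μ+2)/2) ≠ 0 :=
      (Real.Gamma_pos_of_pos (by positivity)).ne'
    have hD1 : (2:ℝ)^α * Real.Gamma (((α:ℝ)-μ+2)/2) * Real.Gamma (((α:ℝ)+μ+2)/2) ≠ 0 :=
      mul_ne_zero (mul_ne_zero (pow_ne_zero _ two_ne_zero) h) hΓ2
    have hD2 : (2:ℝ)^(α+2) * (((α:ℝ)-μ+2)/2 * Real.Gamma (((α:ℝ)-μ+2)/2)) *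
        (((α:ℝ)+μ+2)/2 * Real.Gamma (((α:ℝ)+μ+2)/2)) ≠ 0 :=
      mul_ne_zero (mul_ne_zero (pow_ne_zero _ two_ne_zero) (mul_ne_zero hne1 h)) (mul_ne_zero hne2 hΓ2)
    rw [← mul_div_assoc, ← mul_div_assoc, div_eq_div_iff hD1 hD2]
    ring

private lemma base0' (μ : ℕ) : ∫ θ in (0:ℝ)..π, Real.cos (μ*θ) * Real.sin θ ^ (0:ℕ) =
    π * (Nat.factorial 0 : ℝ) * Real.cos (μ*π/2) /
      (2^(0:ℕ) * Real.Gamma ((((0:ℕ):ℝ) - μ + 2)/2) * Real.Gamma ((((0:ℕ):ℝ) + μ + 2)/2)) := by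
  simp only [pow_zero, mul_one, Nat.factorial_zero, Nat.cast_one, Nat.cast_zero]
  rcases Nat.eq_zero_or_pos μ with h0 | h1
  · subst h0
    norm_num [Real.Gamma_one]
  · rw [int_cos_nat' μ (by omega)]
    symm
    rcases Nat.even_or_odd μ with ⟨m, hm⟩ | ⟨m, hm⟩
    · subst hm
      have hm1 : 1 ≤ m := by omega
      have e : ((0:ℝ) - (↑(m+m):ℝ) + 2)/2 = -((m-1 : ℕ):ℝ) := by
        rw [Nat.cast_sub hm1]; push_cast; ring
      rw [e, Real.Gamma_neg_nat_eq_zero]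
      simp
    · subst hm
      have e : Real.cos ((↑(2*m+1):ℝ)*π/2) = 0 := by
        push_cast; exact cos_odd_mul_pi_div_two' m
      rw [e]
      simp

private lemma base1' (μ : ℕ) : ∫ θ in (0:ℝ)..π, Real.cos (μ*θ) * Real.sin θ ^ (1:ℕ) =
    π * (Nat.factorial 1 : ℝ) * Real.cos (μ*π/2) /
      (2^(1:ℕ) * Real.Gamma ((((1:ℕ):ℝ) - μ + 2)/2) * Real.Gamma ((((1:ℕ):ℝ) + μ + 2)/2)) := by
  simp only [pow_one, Nat.factorial_one, Nat.cast_one]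
  by_cases h1 : μ = 1
  · subst h1
    have hL : ∫ θ in (0:ℝ)..π, Real.cos ((1:ℕ)*θ) * Real.sin θ = 0 := by
      have hd : ∀ θ ∈ Set.uIcc (0:ℝ) π, HasDerivAt (fun θ:ℝ => Real.sin θ^2/2)
          (Real.cos ((1:ℕ)*θ) * Real.sin θ) θ := by
        intro θ _
        have := ((Real.hasDerivAt_sin θ).fun_pow 2).div_const 2
        refine this.congr_deriv ?_
        push_cast
        ring_nf
      rw [integral_eq_sub_of_hasDerivAt hd (Continuous.intervalIntegrable (by fun_prop) _ _)]
      simp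
    rw [hL]
    have : Real.cos (((1:ℕ):ℝ)*π/2) = 0 := by
      rw [Nat.cast_one, one_mul]; exact Real.cos_pi_div_two
    rw [this]
    simp
  · rw [int1'' μ h1]
    rcases Nat.even_or_odd μ with ⟨m, hm⟩ | ⟨m, hm⟩
    · subst hm
      have hc2 : Real.cos ((↑(m+m):ℝ)*π) = 1 := by
        rw [show ((↑(m+m):ℝ))*π = m*(2*π) by push_cast; ring, Real.cos_nat_mul_two_pi]
      have hcos : Real.cos ((↑(m+m):ℝ)*π/2) = (-1:ℝ)^m := by
        rw [show ((↑(m+m):ℝ))*π/2 = m*π by push_cast; ring, cos_nat_mul_pi']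
      have ha : ((1:ℝ) - (↑(m+m):ℝ) + 2)/2 = 3/2 - m := by push_cast; ring
      have hb : ((1:ℝ) + (↑(m+m):ℝ) + 2)/2 = 3/2 + m := by push_cast; ring
      rw [hc2, hcos, ha, hb]
      have hne : (1:ℝ)/4 - (m:ℝ)^2 ≠ 0 := by
        rcases Nat.eq_zero_or_pos m with h | h
        · subst h; norm_num
        · have : (1:ℝ) ≤ (m:ℝ) := by exact_mod_cast h
          nlinarith
      have hne2 : (1:ℝ) - (↑(m+m):ℝ)^2 ≠ 0 := by
        intro hh; apply hne; push_cast at hh; nlinarith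
      rw [show (2:ℝ)*Real.Gamma (3/2-m)*Real.Gamma (3/2+m)
          = 2*(Real.Gamma (3/2-m)*Real.Gamma (3/2+m)) from by ring, GammaProd' m]
      have hden : (2:ℝ)*((1/4 - (m:ℝ)^2) * (-1)^m * π) ≠ 0 := by
        apply mul_ne_zero two_ne_zero
        apply mul_ne_zero (mul_ne_zero hne (pow_ne_zero _ (by norm_num))) Real.pi_ne_zero
      rw [div_eq_div_iff hne2 hden]
      push_cast
      ring
    · subst hm
      have hc : Real.cos ((↑(2*m+1):ℝ)*π) = -1 := by
        rw [show ((↑(2*m+1):ℝ))*π = m*(2*π) + π by push_cast; ring,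
          Real.cos_add_pi, Real.cos_nat_mul_two_pi]
      have hcz : Real.cos ((↑(2*m+1):ℝ)*π/2) = 0 := by
        push_cast; exact cos_odd_mul_pi_div_two' m
      rw [hc, hcz]
      simp

end Helpers

/-- The integral of a single frequency `cos (μθ)` against the weight `sin^α θ` on `[0, π]`.
The convention that the right-hand side vanishes when `(α - μ + 2)/2` is a nonpositive
integer is automatic, since `Real.Gamma` vanishes at nonpositive integers and division by
zero equals zero. -/
theorem integral_cos_mul_sin_pow (μ α : ℕ) (hα : 1 ≤ α) :
    ∫ θ in (0 : ℝ)..π, Real.cos (μ * θ) * (Real.sin θ) ^ α =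
      π * (Nat.factorial α) * Real.cos (μ * π / 2) /
        (2 ^ α * Real.Gamma (((α : ℝ) - μ + 2) / 2) * Real.Gamma (((α : ℝ) + μ + 2) / 2)) := by
  have main : ∀ α μ : ℕ, ∫ θ in (0 : ℝ)..π, Real.cos (μ * θ) * (Real.sin θ) ^ α =
      π * (Nat.factorial α) * Real.cos (μ * π / 2) /
        (2 ^ α * Real.Gamma (((α : ℝ) - μ + 2) / 2) * Real.Gamma (((α : ℝ) + μ + 2) / 2)) := by
    intro α
    induction α using Nat.twoStepInduction with
    | zero => exact fun μ => base0' μ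
    | one => exact fun μ => base1' μ
    | more α ih _ =>
      intro μ
      by_cases hμ : μ = α + 2
      · subst hμ
        rw [diag' (α+2)]
        have g1 : ((↑(α+2):ℝ) - (↑(α+2):ℝ) + 2)/2 = 1 := by ring
        have g2 : ((↑(α+2):ℝ) + (↑(α+2):ℝ) + 2)/2 = (↑(α+2):ℝ) + 1 := by push_cast; ring
        rw [g1, g2]
        rw [show ((↑(α+2):ℝ) + 1) = ((α+2:ℕ):ℝ) + 1 from by push_cast; ring,
          Real.Gamma_nat_eq_factorial, Real.Gamma_one]
        have hf : ((α+2).factorial : ℝ) ≠ 0 := Nat.cast_ne_zero.mpr (Nat.factorial_ne_zero _)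
        have h2p : ((2:ℝ))^(α+2) ≠ 0 := pow_ne_zero _ two_ne_zero
        rw [div_eq_div_iff h2p (by exact mul_ne_zero (mul_ne_zero h2p one_ne_zero) hf)]
        ring
      · have hμ' : (μ:ℝ) ≠ (α:ℝ)+2 := by
          intro h; apply hμ
          have : (μ:ℝ) = ((α+2:ℕ):ℝ) := by push_cast; linarith
          exact_mod_cast this
        have hD : ((α:ℝ)+2)^2 - (μ:ℝ)^2 ≠ 0 := by
          intro h
          have h' : (μ:ℝ)^2 = ((α:ℝ)+2)^2 := by linarith
          rcases sq_eq_sq_iff_eq_or_eq_neg.mp h' with h'' | h''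
          · exact hμ' h''
          · have : (0:ℝ) ≤ (μ:ℝ) := Nat.cast_nonneg μ
            nlinarith
        have hstep := rec_step' μ α
        rw [ih μ] at hstep
        have h2 := rhs_step' μ α hμ'
        have hcast1 : ((↑(α+2):ℝ) - μ + 2)/2 = (((α:ℝ)+2) - μ + 2)/2 := by push_cast; ring
        have hcast2 : ((↑(α+2):ℝ) + μ + 2)/2 = (((α:ℝ)+2) + μ + 2)/2 := by push_cast; ring
        rw [hcast1, hcast2]
        apply mul_left_cancel₀ hD
        exact hstep.trans h2
  exact main α μ
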